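/- Let G be a finite group with subgroups H ≤ A ⊴ G (A normal in G), and let r be an integer with 0 ≤ r ≤ |N_A(H)/H| − 1 and gcd(2, |N_A(H)/H| − 1) dividing r. If A is an (r,1)-regular set of the pair (G,H), then G = N_G(H)A and N_A(H)/H is an (r,1)-regular set of the group N_G(H)/H. -/

import Mathlib

open scoped Pointwise

/-- A subset `C` of the vertices of a graph `Γ` is an `(r,s)`-regular set if every vertex
in `C` has exactly `r` neighbours in `C` and every vertex outside `C` has exactly `s`
neighbours in `C`. -/
def IsRegularVertexSet {V : Type*} (Γ : SimpleGraph V) (C : Set V) (r s : ℕ) : Prop :=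
  (∀ v ∈ C, {w | w ∈ C ∧ Γ.Adj v w}.ncard = r) ∧
  ∀ v ∉ C, {w | w ∈ C ∧ Γ.Adj v w}.ncard = s

/-- The coset graph `Cos(G,H,U)` on the left cosets of `H` in `G`:
`g₁H` and `g₂H` are adjacent iff `g₁⁻¹ g₂ ∈ U`. -/
def cosetGraph {G : Type*} [Group G] (H : Subgroup G) (U : Set G) : SimpleGraph (G ⧸ H) :=
  SimpleGraph.fromRel fun C D =>
    ∃ g₁ g₂ : G, QuotientGroup.mk g₁ = C ∧ QuotientGroup.mk g₂ = D ∧ g₁⁻¹ * g₂ ∈ U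

/-- `U` is a valid connection set for a coset graph `Cos(G,H,U)`:
inverse-closed, disjoint from `H`, and a union of double cosets of `H` (`HUH = U`). -/
def IsCosetGraphConnectionSet {G : Type*} [Group G] (H : Subgroup G) (U : Set G) : Prop :=
  U⁻¹ = U ∧ (H : Set G) ∩ U = ∅ ∧ (H : Set G) * U * (H : Set G) = U

/-- `A` is an `(r,s)`-regular set of the pair `(G,H)`: there is a coset graph
`Cos(G,H,U)` in which the set of left cosets of `H` in `A` is an `(r,s)`-regular set. -/
def IsRegularSetOfPair {G : Type*} [Group G] (H A : Subgroup G) (r s : ℕ) : Prop :=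
  ∃ U : Set G, IsCosetGraphConnectionSet H U ∧
    IsRegularVertexSet (cosetGraph H U)
      {C : G ⧸ H | ∃ a ∈ A, QuotientGroup.mk a = C} r s

/-- `A` is a perfect code of the pair `(G,H)` iff it is a `(0,1)`-regular set of `(G,H)`. -/
def IsPerfectCodeOfPair {G : Type*} [Group G] (H A : Subgroup G) : Prop :=
  IsRegularSetOfPair H A 0 1

/-- A subgroup `A` is an `(r,s)`-regular set of `G` iff it is an `(r,s)`-regular set of
the pair `(G,1)`, i.e. an `(r,s)`-regular set in some Cayley graph of `G`. -/
def IsRegularSetOfGroup {G : Type*} [Group G] (A : Subgroup G) (r s : ℕ) : Prop :=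
  IsRegularSetOfPair ⊥ A r s

/-- A subgroup `A` is a perfect code of `G` iff it is a `(0,1)`-regular set of `G`. -/
def IsPerfectCodeOfGroup {G : Type*} [Group G] (A : Subgroup G) : Prop :=
  IsRegularSetOfGroup A 0 1

/-- The conjugate subgroup `K^t = t⁻¹ K t`. -/
def conjSub {G : Type*} [Group G] (K : Subgroup G) (t : G) : Subgroup G :=
  K.map (MulAut.conj t⁻¹).toMonoidHom

/-- The subgroup `N_A(H)/H` of the quotient group `N_G(H)/H`, where
`N_A(H) = N_G(H) ∩ A`. -/
def NAHmodH {G : Type*} [Group G] (H A : Subgroup G) :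
    Subgroup ((Subgroup.normalizer (H : Set G)) ⧸ H.subgroupOf (Subgroup.normalizer (H : Set G))) :=
  Subgroup.map (QuotientGroup.mk' (H.subgroupOf (Subgroup.normalizer (H : Set G)))) (A.subgroupOf (Subgroup.normalizer (H : Set G)))

section Adj
variable {G : Type*} [Group G] {H : Subgroup G} {U : Set G}

lemma IsCosetGraphConnectionSet.inv_mem (hU : IsCosetGraphConnectionSet H U)
    {u : G} (hu : u ∈ U) : u⁻¹ ∈ U := by
  rw [← hU.1]; simpa using hu

lemma IsCosetGraphConnectionSet.mul_left (hU : IsCosetGraphConnectionSet H U)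
    {h u : G} (hh : h ∈ H) (hu : u ∈ U) : h * u ∈ U := by
  have : h * u * 1 ∈ (H : Set G) * U * (H : Set G) :=
    Set.mul_mem_mul (Set.mul_mem_mul hh hu) H.one_mem
  simpa [hU.2.2] using this

lemma cosetGraph_adj (hU : IsCosetGraphConnectionSet H U) (g₁ g₂ : G) :
    (cosetGraph H U).Adj (QuotientGroup.mk g₁) (QuotientGroup.mk g₂) ↔ g₁⁻¹ * g₂ ∈ U := by
  obtain ⟨hinv, hdisj, hmul⟩ := hU
  rw [cosetGraph, SimpleGraph.fromRel_adj]
  constructor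
  · rintro ⟨hne, ⟨a, b, ha, hb, hab⟩ | ⟨a, b, ha, hb, hab⟩⟩
    · have h1 : a⁻¹ * g₁ ∈ H := QuotientGroup.eq.mp ha
      have h2 : b⁻¹ * g₂ ∈ H := QuotientGroup.eq.mp hb
      have h1' : g₁⁻¹ * a ∈ (H : Set G) := by simpa [mul_inv_rev] using H.inv_mem h1
      have : g₁⁻¹ * g₂ = (g₁⁻¹ * a) * (a⁻¹ * b) * (b⁻¹ * g₂) := by group
      rw [this, ← hmul]
      exact Set.mul_mem_mul (Set.mul_mem_mul h1' hab) h2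
    · have h1 : a⁻¹ * g₂ ∈ H := QuotientGroup.eq.mp ha
      have h2 : b⁻¹ * g₁ ∈ H := QuotientGroup.eq.mp hb
      have h1' : g₂⁻¹ * a ∈ (H : Set G) := by simpa [mul_inv_rev] using H.inv_mem h1
      have key : g₂⁻¹ * g₁ ∈ U := by
        have : g₂⁻¹ * g₁ = (g₂⁻¹ * a) * (a⁻¹ * b) * (b⁻¹ * g₁) := by group
        rw [this, ← hmul]
        exact Set.mul_mem_mul (Set.mul_mem_mul h1' hab) h2
      rw [← hinv]
      simpa [mul_inv_rev] using key
  · intro h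
    refine ⟨?_, Or.inl ⟨g₁, g₂, rfl, rfl, h⟩⟩
    intro heq
    have : g₁⁻¹ * g₂ ∈ H := QuotientGroup.eq.mp heq
    have : g₁⁻¹ * g₂ ∈ (H : Set G) ∩ U := ⟨this, h⟩
    rw [hdisj] at this
    exact this

lemma cosetGraph_nbr_eq (hU : IsCosetGraphConnectionSet H U) (A : Subgroup G) (g : G) :
    {w | w ∈ {C : G ⧸ H | ∃ a ∈ A, QuotientGroup.mk a = C} ∧
        (cosetGraph H U).Adj (QuotientGroup.mk g) w}
      = QuotientGroup.mk '' {a : G | a ∈ A ∧ g⁻¹ * a ∈ U} := by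
  ext w
  constructor
  · rintro ⟨⟨a, haA, rfl⟩, hadj⟩
    exact ⟨a, ⟨haA, (cosetGraph_adj hU g a).mp hadj⟩, rfl⟩
  · rintro ⟨a, ⟨haA, hu⟩, rfl⟩
    exact ⟨⟨a, haA, rfl⟩, (cosetGraph_adj hU g a).mpr hu⟩

end Adj

section Comb
variable {K : Type*} [Group K] [Fintype K]

lemma pairs_lemma : ∀ (k : ℕ) (Q : Set K), (∀ x ∈ Q, x⁻¹ ∈ Q) → (∀ x ∈ Q, x⁻¹ ≠ x) →
    2 * k ≤ Q.ncard → ∃ T : Set K, T ⊆ Q ∧ (∀ x ∈ T, x⁻¹ ∈ T) ∧ T.ncard = 2 * k := by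
  intro k
  induction k with
  | zero => exact fun Q _ _ _ => ⟨∅, Set.empty_subset _, by simp, by simp⟩
  | succ k ih =>
    intro Q hQi hQf hk
    obtain ⟨T, hTQ, hTi, hTc⟩ := ih Q hQi hQf (le_trans (by omega) hk)
    have hlt : T.ncard < Q.ncard := by omega
    obtain ⟨x, hxQ, hxT⟩ := Set.exists_mem_notMem_of_ncard_lt_ncard hlt
    have hxinv : x⁻¹ ∈ Q := hQi x hxQ
    have hxne : x⁻¹ ≠ x := hQf x hxQ
    have hxiT : x⁻¹ ∉ T := fun h => hxT (by simpa using hTi _ h)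
    refine ⟨insert x (insert x⁻¹ T), ?_, ?_, ?_⟩
    · intro y hy
      rcases hy with rfl | rfl | hy
      · exact hxQ
      · exact hxinv
      · exact hTQ hy
    · intro y hy
      rcases hy with rfl | rfl | hy
      · exact Or.inr (Or.inl rfl)
      · exact Or.inl (by simp)
      · exact Or.inr (Or.inr (hTi _ hy))
    · rw [Set.ncard_insert_of_notMem (by
        rintro (h | h)
        · exact hxne h.symm
        · exact hxT h) (Set.toFinite _),
        Set.ncard_insert_of_notMem hxiT (Set.toFinite _), hTc]
      ring

lemma exists_sym_subset (r : ℕ)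
    (hr : r ≤ Nat.card K - 1) (hgcd : Nat.gcd 2 (Nat.card K - 1) ∣ r) :
    ∃ T : Set K, T⁻¹ = T ∧ (1 : K) ∉ T ∧ T.ncard = r := by
  classical
  set I : Set K := {x : K | x ≠ 1 ∧ x⁻¹ = x} with hIdef
  set Q : Set K := {x : K | x ≠ 1 ∧ x⁻¹ ≠ x} with hQdef
  have hQi : ∀ x ∈ Q, x⁻¹ ∈ Q := by
    rintro x ⟨hx1, hxne⟩
    refine ⟨by simpa using hx1, ?_⟩
    rw [inv_inv]
    exact fun h => hxne h.symm
  have hQf : ∀ x ∈ Q, x⁻¹ ≠ x := fun x hx => hx.2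
  have hsum : Q.ncard + I.ncard = Nat.card K - 1 := by
    have hdisj : Disjoint Q I := by
      rw [Set.disjoint_left]
      rintro x ⟨_, h2⟩ ⟨_, h4⟩
      exact h2 h4
    have hunion : Q ∪ I = {x : K | x ≠ 1} := by
      ext x
      simp only [hQdef, hIdef, Set.mem_union, Set.mem_setOf_eq]
      by_cases h : x = 1 <;> by_cases h2 : x⁻¹ = x <;> tauto
    have : ({x : K | x ≠ 1} : Set K).ncard = Nat.card K - 1 := by
      have : {x : K | x ≠ 1} = (Set.univ : Set K) \ {1} := by ext x; simp
      rw [this, Set.ncard_diff_singleton_of_mem (Set.mem_univ _), Set.ncard_univ]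
    rw [← this, ← hunion, Set.ncard_union_eq hdisj (Set.toFinite _) (Set.toFinite _)]
  -- inverse-closed subsets of I ∪ {pairs}
  have buildI : ∀ b ≤ I.ncard, ∃ Ti : Set K, Ti ⊆ I ∧ Ti.ncard = b := by
    intro b hb
    obtain ⟨Ti, h1, h2⟩ := Set.exists_subset_card_eq hb
    exact ⟨Ti, h1, h2⟩
  have mk_final : ∀ (T : Set K), T ⊆ Q ∪ I → (∀ x ∈ T, x⁻¹ ∈ T) → T.ncard = r →
      ∃ T : Set K, T⁻¹ = T ∧ (1 : K) ∉ T ∧ T.ncard = r := by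
    intro T hTsub hTi hTc
    refine ⟨T, ?_, ?_, hTc⟩
    · ext x
      constructor
      · intro hx
        have : x⁻¹ ∈ T := by simpa using hx
        simpa using hTi _ this
      · intro hx
        simpa using hTi _ hx
    · intro h1T
      rcases hTsub h1T with h | h
      · exact h.1 rfl
      · exact h.1 rfl
  by_cases hre : Even r
  · obtain ⟨k, hk⟩ := hre
    by_cases hQb : r ≤ Q.ncard
    · obtain ⟨T, hTQ, hTi, hTc⟩ := pairs_lemma k Q hQi hQf (by omega)
      exact mk_final T (hTQ.trans Set.subset_union_left) hTi (by omega)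
    · obtain ⟨Ti, hTiI, hTic⟩ := buildI (r - Q.ncard) (by omega)
      refine mk_final (Q ∪ Ti) (Set.union_subset_union_right Q hTiI) ?_ ?_
      · intro x hx
        rcases hx with hx | hx
        · exact Or.inl (hQi x hx)
        · exact Or.inr (by rw [(hTiI hx).2]; exact hx)
      · rw [Set.ncard_union_eq ?_ (Set.toFinite _) (Set.toFinite _), hTic]
        · omega
        · rw [Set.disjoint_left]
          intro x hxQ hxTi
          exact hxQ.2 (hTiI hxTi).2
  · -- r odd : K has even order, so there is an involution
    have hodd2 : ¬ (2 ∣ r) := by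
      rintro ⟨c, rfl⟩; exact hre ⟨c, by omega⟩
    have hcard_even : 2 ∣ Fintype.card K := by
      have hne : ¬ (2 ∣ Nat.card K - 1) := by
        intro h
        rw [Nat.gcd_eq_left h] at hgcd
        exact hodd2 hgcd
      have hpos : 0 < Nat.card K := Nat.card_pos
      rw [← Nat.card_eq_fintype_card]
      omega
    haveI : Fact (Nat.Prime 2) := ⟨Nat.prime_two⟩
    obtain ⟨x₀, hx₀⟩ := exists_prime_orderOf_dvd_card 2 hcard_even
    have hx₀ne : x₀ ≠ 1 := by
      intro h; rw [h, orderOf_one] at hx₀; omega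
    have hx₀inv : x₀⁻¹ = x₀ := by
      have : x₀ * x₀ = 1 := by
        have := pow_orderOf_eq_one x₀
        rwa [hx₀, sq] at this
      exact inv_eq_of_mul_eq_one_right this
    have hx₀I : x₀ ∈ I := ⟨hx₀ne, hx₀inv⟩
    have hIpos : 1 ≤ I.ncard := by
      rw [Nat.one_le_iff_ne_zero, Ne, Set.ncard_eq_zero (Set.toFinite _)]
      intro h; rw [h] at hx₀I; exact hx₀I
    by_cases hQb : r - 1 ≤ Q.ncard
    · obtain ⟨k, hk⟩ : ∃ k, r - 1 = 2 * k := by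
        rcases Nat.even_or_odd r with h | h
        · exact absurd h hre
        · obtain ⟨k, hk⟩ := h; exact ⟨k, by omega⟩
      obtain ⟨T, hTQ, hTi, hTc⟩ := pairs_lemma k Q hQi hQf (by omega)
      have hx₀T : x₀ ∉ T := by
        intro h
        exact (hTQ h).2 hx₀inv
      refine mk_final (insert x₀ T) ?_ ?_ ?_
      · intro y hy
        rcases hy with rfl | hy
        · exact Or.inr hx₀I
        · exact Or.inl (hTQ hy)
      · intro y hy
        rcases hy with rfl | hy
        · exact Or.inl hx₀inv
        · exact Or.inr (hTi _ hy)
      · rw [Set.ncard_insert_of_notMem hx₀T (Set.toFinite _), hTc]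
        have : 1 ≤ r := by
          by_contra h
          push_neg at h
          interval_cases r
          · exact hre (by simp)
        omega
    · obtain ⟨Ti, hTiI, hTic⟩ := buildI (r - Q.ncard) (by omega)
      refine mk_final (Q ∪ Ti) (Set.union_subset_union_right Q hTiI) ?_ ?_
      · intro x hx
        rcases hx with hx | hx
        · exact Or.inl (hQi x hx)
        · exact Or.inr (by rw [(hTiI hx).2]; exact hx)
      · rw [Set.ncard_union_eq ?_ (Set.toFinite _) (Set.toFinite _), hTic]
        · omega
        · rw [Set.disjoint_left]
          intro x hxQ hxTi
          exact hxQ.2 (hTiI hxTi).2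

end Comb

section Key
variable {G : Type*} [Group G] [Fintype G]

lemma key_lemma (H A : Subgroup G) (hHA : H ≤ A) (hAnG : A.Normal)
    (U : Set G) (hU : IsCosetGraphConnectionSet H U)
    (hout : ∀ v ∉ {C : G ⧸ H | ∃ a ∈ A, QuotientGroup.mk a = C},
      {w | w ∈ {C : G ⧸ H | ∃ a ∈ A, QuotientGroup.mk a = C} ∧
        (cosetGraph H U).Adj v w}.ncard = 1)
    (g : G) (hg : g ∉ A) :
    ∃ u : G, u ∈ U ∧ u ∈ (Subgroup.normalizer (H : Set G)) ∧ g * u ∈ A ∧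
      ∀ u' ∈ U, g * u' ∈ A → u⁻¹ * u' ∈ H := by
  have hgC : (QuotientGroup.mk g : G ⧸ H) ∉ {C : G ⧸ H | ∃ a ∈ A, QuotientGroup.mk a = C} := by
    rintro ⟨a, haA, heq⟩
    have h1 : a⁻¹ * g ∈ H := QuotientGroup.eq.mp heq
    refine hg ?_
    have : g = a * (a⁻¹ * g) := by group
    rw [this]
    exact A.mul_mem haA (hHA h1)
  have h1 := hout _ hgC
  rw [cosetGraph_nbr_eq hU A g] at h1
  obtain ⟨c, hc⟩ := Set.ncard_eq_one.mp h1
  have hcmem : c ∈ QuotientGroup.mk '' {a : G | a ∈ A ∧ g⁻¹ * a ∈ U} := by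
    rw [hc]; exact Set.mem_singleton c
  obtain ⟨a₀, ⟨ha₀A, ha₀U⟩, ha₀c⟩ := hcmem
  have uniq : ∀ u' ∈ U, g * u' ∈ A → (g⁻¹ * a₀)⁻¹ * u' ∈ H := by
    intro u' hu' hgu'
    have hmem : (QuotientGroup.mk (g * u') : G ⧸ H) ∈ QuotientGroup.mk '' {a : G | a ∈ A ∧ g⁻¹ * a ∈ U} :=
      ⟨g * u', ⟨hgu', by rwa [inv_mul_cancel_left]⟩, rfl⟩
    rw [hc, Set.mem_singleton_iff] at hmem
    have heq : (QuotientGroup.mk a₀ : G ⧸ H) = QuotientGroup.mk (g * u') := by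
      rw [ha₀c, hmem]
    have h2 : a₀⁻¹ * (g * u') ∈ H := QuotientGroup.eq.mp heq
    have h3 : (g⁻¹ * a₀)⁻¹ * u' = a₀⁻¹ * (g * u') := by group
    rw [h3]; exact h2
  refine ⟨g⁻¹ * a₀, ha₀U, ?_, ?_, uniq⟩
  · have hguA : g * (g⁻¹ * a₀) ∈ A := by rwa [mul_inv_cancel_left]
    have hstep : ∀ h ∈ H, (g⁻¹ * a₀)⁻¹ * h * (g⁻¹ * a₀) ∈ H := by
      intro h hh
      have hA1 : h * (g⁻¹ * a₀) ∈ U := hU.mul_left hh ha₀U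
      have hA2 : g * (h * (g⁻¹ * a₀)) ∈ A := by
        have he : g * (h * (g⁻¹ * a₀)) = (g * h * g⁻¹) * (g * (g⁻¹ * a₀)) := by group
        rw [he]
        exact A.mul_mem (hAnG.conj_mem h (hHA hh) g) hguA
      have h4 := uniq _ hA1 hA2
      have he2 : (g⁻¹ * a₀)⁻¹ * h * (g⁻¹ * a₀) = (g⁻¹ * a₀)⁻¹ * (h * (g⁻¹ * a₀)) := by group
      rw [he2]; exact h4
    have hinv : (g⁻¹ * a₀)⁻¹ ∈ (Subgroup.normalizer (H : Set G)) := by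
      refine Subgroup.mem_normalizer_fintype fun n hn => ?_
      simpa using hstep n hn
    exact inv_mem_iff.mp hinv
  · rwa [mul_inv_cancel_left]

end Key


lemma mkbot_inj {N : Type*} [Group N] :
    Function.Injective (QuotientGroup.mk : N → N ⧸ (⊥ : Subgroup N)) := by
  intro x y h
  have h2 : x⁻¹ * y ∈ (⊥ : Subgroup N) := QuotientGroup.eq.mp h
  rw [Subgroup.mem_bot] at h2
  exact inv_mul_eq_one.mp h2

lemma Dmem {G : Type*} [Group G] (H A : Subgroup G) (hHA : H ≤ A) (z : (Subgroup.normalizer (H : Set G))) :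
    (QuotientGroup.mk z : (Subgroup.normalizer (H : Set G)) ⧸ H.subgroupOf (Subgroup.normalizer (H : Set G))) ∈ NAHmodH H A
      ↔ (z : G) ∈ A := by
  constructor
  · intro hm
    rw [NAHmodH, Subgroup.mem_map] at hm
    obtain ⟨v, hv, hveq⟩ := hm
    rw [QuotientGroup.mk'_apply] at hveq
    have h2 : v⁻¹ * z ∈ H.subgroupOf (Subgroup.normalizer (H : Set G)) := QuotientGroup.eq.mp hveq
    rw [Subgroup.mem_subgroupOf] at h2 hv
    have hz : (z : G) = (v : G) * ((v⁻¹ * z : (Subgroup.normalizer (H : Set G))) : G) := by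
      push_cast; group
    rw [hz]
    exact A.mul_mem hv (hHA h2)
  · intro hz
    rw [NAHmodH, Subgroup.mem_map]
    exact ⟨z, Subgroup.mem_subgroupOf.mpr hz, rfl⟩

lemma part2 {G : Type*} [Group G] [Fintype G] (H A : Subgroup G)
    (hHA : H ≤ A) (hAnG : A.Normal) (r : ℕ)
    (hr : r ≤ Nat.card ↥(NAHmodH H A) - 1)
    (hgcd : Nat.gcd 2 (Nat.card ↥(NAHmodH H A) - 1) ∣ r)
    (U : Set G) (hU : IsCosetGraphConnectionSet H U)
    (hout : ∀ v ∉ {C : G ⧸ H | ∃ a ∈ A, QuotientGroup.mk a = C},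
      {w | w ∈ {C : G ⧸ H | ∃ a ∈ A, QuotientGroup.mk a = C} ∧
        (cosetGraph H U).Adj v w}.ncard = 1) :
    IsRegularSetOfGroup (NAHmodH H A) r 1 := by
  classical
  obtain ⟨T, hTinv, hT1, hTc⟩ := exists_sym_subset (K := ↥(NAHmodH H A)) r hr hgcd
  set Tb : Set ((Subgroup.normalizer (H : Set G)) ⧸ H.subgroupOf (Subgroup.normalizer (H : Set G))) :=
    (fun t : ↥(NAHmodH H A) => (t : (Subgroup.normalizer (H : Set G)) ⧸ H.subgroupOf (Subgroup.normalizer (H : Set G)))) '' T with hTbdef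
  set Sb : Set ((Subgroup.normalizer (H : Set G)) ⧸ H.subgroupOf (Subgroup.normalizer (H : Set G))) :=
    QuotientGroup.mk '' {v : (Subgroup.normalizer (H : Set G)) | (v : G) ∈ U ∧ (v : G) ∉ A} with hSbdef
  have hTbD : ∀ x ∈ Tb, x ∈ NAHmodH H A := by
    rintro x ⟨t, ht, rfl⟩
    exact SetLike.coe_mem t
  have hTbinv : ∀ x ∈ Tb, x⁻¹ ∈ Tb := by
    rintro x ⟨t, ht, rfl⟩
    refine ⟨t⁻¹, ?_, by simp⟩
    rw [← hTinv]
    simpa using ht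
  have hSbinv : ∀ x ∈ Sb, x⁻¹ ∈ Sb := by
    rintro x ⟨v, ⟨hvU, hvA⟩, rfl⟩
    refine ⟨v⁻¹, ⟨by simpa using hU.inv_mem hvU, ?_⟩, by simp [QuotientGroup.mk_inv]⟩
    intro h
    apply hvA
    have h2 : ((v : G)⁻¹)⁻¹ ∈ A := A.inv_mem (by simpa using h)
    simpa using h2
  have hSD : ∀ x ∈ Sb, x ∉ NAHmodH H A := by
    rintro x ⟨v, ⟨hvU, hvA⟩, rfl⟩ h
    exact hvA ((Dmem H A hHA v).mp h)
  have hconn : IsCosetGraphConnectionSet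
      (⊥ : Subgroup ((Subgroup.normalizer (H : Set G)) ⧸ H.subgroupOf (Subgroup.normalizer (H : Set G)))) (Sb ∪ Tb) := by
    refine ⟨?_, ?_, ?_⟩
    · ext x
      simp only [Set.mem_inv, Set.mem_union]
      constructor
      · rintro (h | h)
        · have h2 := hSbinv _ h
          simp only [inv_inv] at h2
          exact Or.inl h2
        · have h2 := hTbinv _ h
          simp only [inv_inv] at h2
          exact Or.inr h2
      · rintro (h | h)
        · exact Or.inl (hSbinv _ h)
        · exact Or.inr (hTbinv _ h)
    · rw [Set.eq_empty_iff_forall_notMem]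
      rintro y ⟨hy1, hy2⟩
      have hy1' : y = 1 := by simpa using hy1
      subst hy1'
      rcases hy2 with h | h
      · obtain ⟨v, ⟨hvU, hvA⟩, hveq⟩ := h
        have h8 : v ∈ H.subgroupOf (Subgroup.normalizer (H : Set G)) := (QuotientGroup.eq_one_iff v).mp hveq
        exact hvA (hHA (Subgroup.mem_subgroupOf.mp h8))
      · obtain ⟨t, htT, hteq⟩ := h
        have h9 : t = 1 := OneMemClass.coe_eq_one.mp hteq
        rw [h9] at htT
        exact hT1 htT
    · rw [Subgroup.coe_bot, Set.singleton_one, one_mul, mul_one]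
  unfold IsRegularSetOfGroup IsRegularSetOfPair IsRegularVertexSet
  refine ⟨Sb ∪ Tb, hconn, ?_, ?_⟩
  · -- vertices inside the regular set
    intro v hv
    obtain ⟨x, rfl⟩ := QuotientGroup.mk_surjective v
    have hxD : x ∈ NAHmodH H A := by
      obtain ⟨a, haD, heq⟩ := hv
      exact mkbot_inj heq ▸ haD
    rw [cosetGraph_nbr_eq hconn (NAHmodH H A) x]
    have hset : {a | a ∈ NAHmodH H A ∧ x⁻¹ * a ∈ Sb ∪ Tb} = (fun s => x * s) '' Tb := by
      ext y
      constructor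
      · rintro ⟨hyD, hS | hT⟩
        · exact absurd ((NAHmodH H A).mul_mem ((NAHmodH H A).inv_mem hxD) hyD) (hSD _ hS)
        · exact ⟨x⁻¹ * y, hT, by group⟩
      · rintro ⟨s, hsT, rfl⟩
        refine ⟨(NAHmodH H A).mul_mem hxD (hTbD _ hsT), Or.inr ?_⟩
        rwa [inv_mul_cancel_left]
    rw [hset, Set.ncard_image_of_injective _ mkbot_inj,
      Set.ncard_image_of_injective _ (mul_right_injective x), hTbdef,
      Set.ncard_image_of_injective _ Subtype.coe_injective, hTc]
  · -- vertices outside the regular set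
    intro v hv
    obtain ⟨x, rfl⟩ := QuotientGroup.mk_surjective v
    have hxD : x ∉ NAHmodH H A := fun h => hv ⟨x, h, rfl⟩
    obtain ⟨z, rfl⟩ := QuotientGroup.mk_surjective x
    have hzA : (z : G) ∉ A := fun h => hxD ((Dmem H A hHA z).mpr h)
    obtain ⟨u, huU, hun, hzuA, huniq⟩ := key_lemma H A hHA hAnG U hU hout (z : G) hzA
    have huA : u ∉ A := by
      intro h
      apply hzA
      have h3 : (z : G) = ((z : G) * u) * u⁻¹ := by group
      rw [h3]
      exact A.mul_mem hzuA (A.inv_mem h)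
    rw [cosetGraph_nbr_eq hconn (NAHmodH H A) (QuotientGroup.mk z)]
    have hset : {a | a ∈ NAHmodH H A ∧ (QuotientGroup.mk z)⁻¹ * a ∈ Sb ∪ Tb}
        = {QuotientGroup.mk (z * ⟨u, hun⟩)} := by
      ext y
      constructor
      · rintro ⟨hyD, hS | hT⟩
        · obtain ⟨w, ⟨hwU, hwA⟩, hweq⟩ := hS
          have hy : y = QuotientGroup.mk (z * w) := by
            rw [QuotientGroup.mk_mul, hweq]
            group
          have hzwA : (z : G) * (w : G) ∈ A := by
            have h5 : QuotientGroup.mk (z * w) ∈ NAHmodH H A := hy ▸ hyD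
            simpa using (Dmem H A hHA (z * w)).mp h5
          have hH : u⁻¹ * (w : G) ∈ H := huniq (w : G) hwU hzwA
          have heq7 : (QuotientGroup.mk (⟨u, hun⟩ : (Subgroup.normalizer (H : Set G))) :
              (Subgroup.normalizer (H : Set G)) ⧸ H.subgroupOf (Subgroup.normalizer (H : Set G))) = QuotientGroup.mk w := by
            rw [QuotientGroup.eq, Subgroup.mem_subgroupOf]
            simpa using hH
          rw [hy, Set.mem_singleton_iff, QuotientGroup.mk_mul, QuotientGroup.mk_mul, heq7]
        · exfalso
          have h6 : (QuotientGroup.mk z)⁻¹ * y ∈ NAHmodH H A := hTbD _ hT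
          refine hxD ?_
          have h7 : (QuotientGroup.mk z : (Subgroup.normalizer (H : Set G)) ⧸ H.subgroupOf (Subgroup.normalizer (H : Set G)))
              = y * ((QuotientGroup.mk z)⁻¹ * y)⁻¹ := by group
          rw [h7]
          exact (NAHmodH H A).mul_mem hyD ((NAHmodH H A).inv_mem h6)
      · rintro rfl
        refine ⟨?_, Or.inl ?_⟩
        · refine (Dmem H A hHA (z * ⟨u, hun⟩)).mpr ?_
          simpa using hzuA
        · refine ⟨⟨u, hun⟩, ⟨huU, huA⟩, ?_⟩
          rw [QuotientGroup.mk_mul]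
          group
    rw [hset, Set.image_singleton, Set.ncard_singleton]


/-- **Theorem C (converse direction for `s = 1`).** Let `H ≤ A ⊴ G` and let `r` satisfy
`0 ≤ r ≤ |N_A(H)/H| − 1` with `gcd(2, |N_A(H)/H| − 1)` dividing `r`. If `A` is an
`(r,1)`-regular set of `(G,H)`, then `G = N_G(H)A` and `N_A(H)/H` is an `(r,1)`-regular
set of `N_G(H)/H`. -/
theorem theoremC_converse {G : Type*} [Group G] [Fintype G] (H A : Subgroup G)
    (hHA : H ≤ A) (hAnG : A.Normal) (r : ℕ)
    (hr : r ≤ Nat.card ↥(NAHmodH H A) - 1)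
    (hgcd : Nat.gcd 2 (Nat.card ↥(NAHmodH H A) - 1) ∣ r)
    (hreg : IsRegularSetOfPair H A r 1) :
    ((Subgroup.normalizer (H : Set G)) : Set G) * (A : Set G) = Set.univ ∧
      IsRegularSetOfGroup (NAHmodH H A) r 1 := by
  obtain ⟨U, hU, hCin, hCout⟩ := hreg
  constructor
  · apply Set.eq_univ_iff_forall.mpr
    intro g
    by_cases hg : g ∈ A
    · exact ⟨1, (Subgroup.normalizer (H : Set G)).one_mem, g, hg, one_mul g⟩
    · obtain ⟨u, huU, hun, hguA, -⟩ := key_lemma H A hHA hAnG U hU hCout g hg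
      have hg2 : g = u⁻¹ * (u * (g * u) * u⁻¹) := by group
      rw [hg2]
      exact Set.mul_mem_mul ((Subgroup.normalizer (H : Set G)).inv_mem hun) (hAnG.conj_mem _ hguA u)
  · exact part2 H A hHA hAnG r hr hgcd U hU hCout
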